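/- For 0 < q < 1 and all z ∈ ℂ, the second Euler q-identity holds: Σ_{n=0}^∞ (−1)^n q^{n(n−1)/2} z^n / ((q;q)_n) = Π_{k=0}^∞ (1 − q^k z), where (q;q)_n = Π_{k=1}^n (1 − q^k). -/

import Mathlib

set_option maxHeartbeats 1000000

open Finset Filter Topology

noncomputable def euler2a (q : ℝ) (n : ℕ) : ℂ :=
  (-1) ^ n * (q : ℂ) ^ (n * (n - 1) / 2) / ∏ k ∈ range n, (1 - (q : ℂ) ^ (k + 1))

lemma euler2a_real (q : ℝ) (n : ℕ) :
    euler2a q n = (((-1) ^ n * q ^ (n * (n - 1) / 2) /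
      ∏ k ∈ range n, (1 - q ^ (k + 1)) : ℝ) : ℂ) := by
  unfold euler2a; push_cast; ring

lemma euler2_factor_pos {q : ℝ} (hq0 : 0 < q) (hq1 : q < 1) (k : ℕ) :
    0 < 1 - q ^ (k + 1) := by
  have : q ^ (k + 1) < 1 := pow_lt_one₀ hq0.le hq1 (by omega)
  linarith

lemma euler2_prod_pos {q : ℝ} (hq0 : 0 < q) (hq1 : q < 1) (n : ℕ) :
    0 < ∏ k ∈ range n, (1 - q ^ (k + 1)) :=
  Finset.prod_pos fun k _ => euler2_factor_pos hq0 hq1 k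

lemma euler2_cfactor_ne {q : ℝ} (hq0 : 0 < q) (hq1 : q < 1) (k : ℕ) :
    (1 - (q : ℂ) ^ (k + 1)) ≠ 0 := by
  have h := euler2_factor_pos hq0 hq1 k
  have : (1 - (q : ℂ) ^ (k + 1)) = ((1 - q ^ (k + 1) : ℝ) : ℂ) := by push_cast; ring
  rw [this]
  exact_mod_cast ne_of_gt h

lemma euler2_cprod_ne {q : ℝ} (hq0 : 0 < q) (hq1 : q < 1) (n : ℕ) :
    (∏ k ∈ range n, (1 - (q : ℂ) ^ (k + 1))) ≠ 0 :=
  Finset.prod_ne_zero_iff.mpr fun k _ => euler2_cfactor_ne hq0 hq1 k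

/-- recurrence -/
lemma euler2a_rec {q : ℝ} (hq0 : 0 < q) (hq1 : q < 1) (n : ℕ) :
    euler2a q (n + 1) * (1 - (q : ℂ) ^ (n + 1)) = -(q : ℂ) ^ n * euler2a q n := by
  unfold euler2a
  rw [Finset.prod_range_succ]
  have he : (n + 1) * (n + 1 - 1) / 2 = n * (n - 1) / 2 + n := by
    have h : (n + 1) * (n + 1 - 1) = n * (n - 1) + 2 * n := by
      cases n with
      | zero => rfl
      | succ m => simp only [Nat.add_sub_cancel]; ring
    rw [h, Nat.add_mul_div_left _ _ (by norm_num : 0 < 2)]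
  rw [he, pow_add, pow_succ]
  have h1 := euler2_cprod_ne hq0 hq1 n
  have h2 := euler2_cfactor_ne hq0 hq1 n
  field_simp
  ring


lemma euler2_pochhammer_lb {q : ℝ} (hq0 : 0 < q) (hq1 : q < 1) (n : ℕ) :
    Real.exp (-(q / (1 - q) ^ 2)) ≤ ∏ k ∈ range n, (1 - q ^ (k + 1)) := by
  have h1q : 0 < 1 - q := by linarith
  have hfac : ∀ k ∈ range n, Real.exp (-(q ^ (k + 1) / (1 - q))) ≤ 1 - q ^ (k + 1) := by
    intro k _
    set x := q ^ (k + 1) with hx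
    have hx0 : 0 < x := pow_pos hq0 _
    have hxq : x ≤ q := by
      calc x ≤ q ^ 1 := pow_le_pow_of_le_one hq0.le hq1.le (by omega)
      _ = q := pow_one q
    have hx1 : x < 1 := lt_of_le_of_lt hxq hq1
    have ht0 : 0 ≤ x / (1 - q) := by positivity
    have ht : x / (1 - q) * (1 - q) = x := div_mul_cancel₀ _ (ne_of_gt h1q)
    have h2 : (1 - x)⁻¹ ≤ Real.exp (x / (1 - q)) := by
      refine le_trans ?_ (Real.add_one_le_exp _)
      rw [inv_le_iff_one_le_mul₀ (by linarith)]
      nlinarith [mul_nonneg ht0 (sub_nonneg.mpr hxq)]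
    have h4 : (1 : ℝ) ≤ (1 - x) * Real.exp (x / (1 - q)) := by
      have := mul_le_mul_of_nonneg_left h2 (by linarith : (0:ℝ) ≤ 1 - x)
      rwa [mul_inv_cancel₀ (by linarith : (1:ℝ) - x ≠ 0)] at this
    rw [Real.exp_neg, inv_le_iff_one_le_mul₀ (Real.exp_pos _)]
    linarith [h4]
  calc Real.exp (-(q / (1 - q) ^ 2))
      ≤ ∏ k ∈ range n, Real.exp (-(q ^ (k + 1) / (1 - q))) := by
        rw [← Real.exp_sum]
        apply Real.exp_le_exp.mpr
        have hsum : ∑ k ∈ range n, q ^ (k + 1) ≤ q / (1 - q) := by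
          have h1 : ∑ k ∈ range n, q ^ (k + 1) = q * ∑ k ∈ range n, q ^ k := by
            rw [Finset.mul_sum]; exact Finset.sum_congr rfl fun k _ => by ring
          have h2 : ∑ k ∈ range n, q ^ k ≤ (1 - q)⁻¹ := by
            have := Summable.sum_le_tsum (range n) (fun i _ => by positivity)
              (summable_geometric_of_lt_one hq0.le hq1)
            rwa [tsum_geometric_of_lt_one hq0.le hq1] at this
          rw [h1, div_eq_mul_inv]
          exact mul_le_mul_of_nonneg_left h2 hq0.le
        have : ∑ k ∈ range n, -(q ^ (k + 1) / (1 - q)) =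
            -((∑ k ∈ range n, q ^ (k + 1)) / (1 - q)) := by
          rw [Finset.sum_div, ← Finset.sum_neg_distrib]
        have hmul : (∑ k ∈ range n, q ^ (k + 1)) * (1 - q) ≤ q := by
          have := mul_le_mul_of_nonneg_right hsum (le_of_lt h1q)
          rwa [div_mul_cancel₀ _ (ne_of_gt h1q)] at this
        rw [this, neg_le_neg_iff, div_le_div_iff₀ h1q (by positivity)]
        nlinarith [hmul, h1q]
    _ ≤ ∏ k ∈ range n, (1 - q ^ (k + 1)) :=
        Finset.prod_le_prod (fun k _ => (Real.exp_pos _).le) hfac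

/-- norm bound -/
lemma euler2a_norm {q : ℝ} (hq0 : 0 < q) (hq1 : q < 1) (n : ℕ) :
    ‖euler2a q n‖ ≤ q ^ (n * (n - 1) / 2) / Real.exp (-(q / (1 - q) ^ 2)) := by
  have hP := euler2_prod_pos hq0 hq1 n
  have hc := euler2_pochhammer_lb hq0 hq1 n
  have hcpos : (0:ℝ) < Real.exp (-(q / (1 - q) ^ 2)) := Real.exp_pos _
  rw [euler2a_real, Complex.norm_real, Real.norm_eq_abs]
  have habs : |(-1 : ℝ) ^ n * q ^ (n * (n - 1) / 2) /
      ∏ k ∈ range n, (1 - q ^ (k + 1))| =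
      q ^ (n * (n - 1) / 2) / ∏ k ∈ range n, (1 - q ^ (k + 1)) := by
    rw [abs_div, abs_mul, abs_pow, abs_neg, abs_one, one_pow, one_mul,
      abs_of_pos hP, abs_of_nonneg (by positivity : (0:ℝ) ≤ q ^ (n * (n - 1) / 2))]
  rw [habs]
  exact div_le_div_of_nonneg_left (by positivity) hcpos hc


lemma euler2_summable {q : ℝ} (hq0 : 0 < q) (hq1 : q < 1) (w : ℂ) :
    Summable (fun n => euler2a q n * w ^ n) := by
  have h1q : (0:ℝ) < 1 - q := by linarith
  apply summable_of_ratio_norm_eventually_le (r := 1/2) (by norm_num)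
  have key : ∀ n : ℕ, ‖euler2a q (n+1) * w ^ (n+1)‖ ≤
      (q ^ n * ‖w‖ / (1 - q)) * ‖euler2a q n * w ^ n‖ := by
    intro n
    have h := euler2a_rec hq0 hq1 n
    have hnorm : ‖euler2a q (n+1)‖ * (1 - q^(n+1)) = q ^ n * ‖euler2a q n‖ := by
      have := congrArg norm h
      rw [norm_mul, norm_mul, norm_neg, norm_pow, Complex.norm_real,
        Real.norm_eq_abs, abs_of_pos hq0] at this
      have hfac : ‖(1 - (q:ℂ)^(n+1))‖ = 1 - q^(n+1) := by
        have he : (1 - (q:ℂ) ^ (n+1)) = ((1 - q ^ (n+1) : ℝ) : ℂ) := by push_cast; ring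
        rw [he, Complex.norm_real, Real.norm_eq_abs,
          abs_of_pos (euler2_factor_pos hq0 hq1 n)]
      rwa [hfac] at this
    have hfp := euler2_factor_pos hq0 hq1 n
    have ha1 : ‖euler2a q (n+1)‖ ≤ q ^ n * ‖euler2a q n‖ / (1 - q) := by
      rw [le_div_iff₀ h1q]
      calc ‖euler2a q (n+1)‖ * (1 - q) ≤ ‖euler2a q (n+1)‖ * (1 - q^(n+1)) := by
            apply mul_le_mul_of_nonneg_left _ (norm_nonneg _)
            have : q ^ (n+1) ≤ q := by
              calc q ^ (n+1) ≤ q ^ 1 := pow_le_pow_of_le_one hq0.le hq1.le (by omega)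
              _ = q := pow_one q
            linarith
        _ = q ^ n * ‖euler2a q n‖ := hnorm
    calc ‖euler2a q (n+1) * w ^ (n+1)‖ = ‖euler2a q (n+1)‖ * (‖w‖ * ‖w‖ ^ n) := by
          rw [norm_mul, norm_pow, pow_succ]; ring
      _ ≤ (q ^ n * ‖euler2a q n‖ / (1 - q)) * (‖w‖ * ‖w‖ ^ n) := by
          apply mul_le_mul_of_nonneg_right ha1 (by positivity)
      _ = (q ^ n * ‖w‖ / (1 - q)) * ‖euler2a q n * w ^ n‖ := by
          rw [norm_mul, norm_pow]; ring
  have htend : Tendsto (fun n : ℕ => q ^ n * ‖w‖ / (1 - q)) atTop (𝓝 0) := by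
    have := (tendsto_pow_atTop_nhds_zero_of_lt_one hq0.le hq1).mul_const ‖w‖
    simpa using this.div_const (1 - q)
  filter_upwards [htend.eventually_le_const (by norm_num : (0:ℝ) < 1/2)] with n hn
  exact le_trans (key n) (mul_le_mul_of_nonneg_right hn (norm_nonneg _))

noncomputable def euler2G (q : ℝ) (w : ℂ) : ℂ := ∑' n, euler2a q n * w ^ n

lemma euler2a_zero (q : ℝ) : euler2a q 0 = 1 := by unfold euler2a; simp

lemma euler2G_funeq {q : ℝ} (hq0 : 0 < q) (hq1 : q < 1) (z : ℂ) :
    euler2G q z = (1 - z) * euler2G q ((q : ℂ) * z) := by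
  have hs0 := euler2_summable hq0 hq1 z
  have hs1 := euler2_summable hq0 hq1 ((q : ℂ) * z)
  have hs1' : Summable (fun n => euler2a q (n+1) * ((q:ℂ)*z)^(n+1)) :=
    (summable_nat_add_iff 1).mpr hs1
  have hs1z : Summable (fun n => z * (euler2a q n * ((q:ℂ)*z)^n)) := hs1.mul_left z
  have key : ∀ n : ℕ,
      euler2a q (n+1) * ((q:ℂ)*z)^(n+1) - z * (euler2a q n * ((q:ℂ)*z)^n)
        = euler2a q (n+1) * z^(n+1) := by
    intro n
    linear_combination (-(z^(n+1))) * (euler2a_rec hq0 hq1 n)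
  symm
  calc (1 - z) * euler2G q ((q:ℂ) * z)
      = (∑' n, euler2a q n * ((q:ℂ)*z)^n) - z * ∑' n, euler2a q n * ((q:ℂ)*z)^n := by
        rw [euler2G]; ring
    _ = (euler2a q 0 * ((q:ℂ)*z)^0 + ∑' n, euler2a q (n+1) * ((q:ℂ)*z)^(n+1))
        - ∑' n, z * (euler2a q n * ((q:ℂ)*z)^n) := by
        rw [← tsum_mul_left, Summable.tsum_eq_zero_add hs1]
    _ = euler2a q 0 * z^0 + ∑' n, (euler2a q (n+1) * ((q:ℂ)*z)^(n+1)
        - z * (euler2a q n * ((q:ℂ)*z)^n)) := by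
        rw [Summable.tsum_sub hs1' hs1z, pow_zero, pow_zero, add_sub_assoc]
    _ = euler2a q 0 * z^0 + ∑' n, euler2a q (n+1) * z^(n+1) := by
        congr 1; exact tsum_congr key
    _ = euler2G q z := (Summable.tsum_eq_zero_add hs0).symm

lemma euler2G_iter {q : ℝ} (hq0 : 0 < q) (hq1 : q < 1) (z : ℂ) (N : ℕ) :
    euler2G q z = (∏ k ∈ range N, (1 - (q:ℂ)^k * z)) * euler2G q ((q:ℂ)^N * z) := by
  induction N with
  | zero => rw [range_zero, prod_empty, pow_zero, one_mul, one_mul]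
  | succ N ih =>
    rw [ih, prod_range_succ, euler2G_funeq hq0 hq1 ((q:ℂ)^N * z)]
    have harg : (q:ℂ) * ((q:ℂ)^N * z) = (q:ℂ)^(N+1) * z := by ring
    rw [harg]; ring

lemma euler2_summable_norm {q : ℝ} (hq0 : 0 < q) (hq1 : q < 1) :
    Summable (fun n => ‖euler2a q n‖) := by
  set c := Real.exp (-(q / (1 - q) ^ 2)) with hc
  have hcpos : (0:ℝ) < c := Real.exp_pos _
  refine Summable.of_nonneg_of_le (fun n => norm_nonneg _) (fun n => ?_)
    ((summable_geometric_of_lt_one hq0.le hq1).mul_left (1/(c*q)))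
  have h1 := euler2a_norm hq0 hq1 n
  have hle : n - 1 ≤ n * (n - 1) / 2 := by
    rw [Nat.le_div_iff_mul_le (by norm_num : 0 < 2)]
    rcases n with _ | _ | m
    · simp
    · simp
    · show (m + 1) * 2 ≤ (m + 2) * (m + 1)
      nlinarith [Nat.zero_le m]
  have h2 : q ^ (n * (n - 1) / 2) ≤ q ^ (n - 1) :=
    pow_le_pow_of_le_one hq0.le hq1.le hle
  have h3 : q ^ (n - 1) ≤ q ^ n / q := by
    rcases n with _ | m
    · simp only [pow_zero]
      rw [le_div_iff₀ hq0]; simpa using hq1.le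
    · simp only [Nat.add_sub_cancel, pow_succ]
      rw [mul_div_cancel_right₀ _ (ne_of_gt hq0)]
  calc ‖euler2a q n‖ ≤ q ^ (n * (n - 1) / 2) / c := h1
    _ ≤ q ^ (n - 1) / c := (div_le_div_iff_of_pos_right hcpos).mpr h2
    _ ≤ (q ^ n / q) / c := (div_le_div_iff_of_pos_right hcpos).mpr h3
    _ = (1/(c*q)) * q ^ n := by field_simp

lemma euler2G_tail {q : ℝ} (hq0 : 0 < q) (hq1 : q < 1) {w : ℂ} (hw : ‖w‖ ≤ 1) :
    ‖euler2G q w - 1‖ ≤ (∑' n, ‖euler2a q (n+1)‖) * ‖w‖ := by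
  have hs := euler2_summable hq0 hq1 w
  have hsn := euler2_summable_norm hq0 hq1
  have hsn' : Summable (fun n => ‖euler2a q (n+1)‖) := (summable_nat_add_iff 1).mpr hsn
  have h0 : euler2G q w = 1 + ∑' n, euler2a q (n+1) * w^(n+1) := by
    rw [euler2G, Summable.tsum_eq_zero_add hs, euler2a_zero, pow_zero, mul_one]
  rw [h0, add_sub_cancel_left]
  have hterm : ∀ n : ℕ, ‖euler2a q (n+1) * w^(n+1)‖ ≤ ‖euler2a q (n+1)‖ * ‖w‖ := by
    intro n
    rw [norm_mul, norm_pow]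
    apply mul_le_mul_of_nonneg_left _ (norm_nonneg _)
    calc ‖w‖ ^ (n+1) ≤ ‖w‖ ^ 1 := pow_le_pow_of_le_one (norm_nonneg _) hw (by omega)
      _ = ‖w‖ := pow_one _
  have hmaj : Summable (fun n => ‖euler2a q (n+1)‖ * ‖w‖) := hsn'.mul_right _
  calc ‖∑' n, euler2a q (n+1) * w^(n+1)‖
      ≤ ∑' n, ‖euler2a q (n+1)‖ * ‖w‖ := tsum_of_norm_bounded hmaj.hasSum hterm
    _ = (∑' n, ‖euler2a q (n+1)‖) * ‖w‖ := tsum_mul_right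

lemma euler2G_tendsto {q : ℝ} (hq0 : 0 < q) (hq1 : q < 1) (z : ℂ) :
    Tendsto (fun N : ℕ => euler2G q ((q:ℂ)^N * z)) atTop (𝓝 1) := by
  have hqc : ‖(q:ℂ)‖ = q := by rw [Complex.norm_real, Real.norm_eq_abs, abs_of_pos hq0]
  have htend : Tendsto (fun N : ℕ => q ^ N * ‖z‖) atTop (𝓝 0) := by
    simpa using (tendsto_pow_atTop_nhds_zero_of_lt_one hq0.le hq1).mul_const ‖z‖
  rw [← tendsto_sub_nhds_zero_iff]
  apply squeeze_zero_norm'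
    (a := fun N => (∑' n, ‖euler2a q (n+1)‖) * (q ^ N * ‖z‖))
  · filter_upwards [htend.eventually_le_const (by norm_num : (0:ℝ) < 1)] with N hN
    have hw : ‖(q:ℂ)^N * z‖ ≤ 1 := by rw [norm_mul, norm_pow, hqc]; exact hN
    have := euler2G_tail hq0 hq1 hw
    rwa [norm_mul, norm_pow, hqc] at this
  · simpa using htend.const_mul (∑' n, ‖euler2a q (n+1)‖)

lemma euler2_tendsto_prod {q : ℝ} (hq0 : 0 < q) (hq1 : q < 1) (z : ℂ) :
    Tendsto (fun N : ℕ => ∏ k ∈ range N, (1 - (q:ℂ)^k * z)) atTop (𝓝 (euler2G q z)) := by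
  have h1 := euler2G_tendsto hq0 hq1 z
  have hne : ∀ᶠ N : ℕ in atTop, euler2G q ((q:ℂ)^N * z) ≠ 0 := h1.eventually_ne one_ne_zero
  have h2 : Tendsto (fun N : ℕ => euler2G q z / euler2G q ((q:ℂ)^N * z)) atTop
      (𝓝 (euler2G q z / 1)) := tendsto_const_nhds.div h1 one_ne_zero
  rw [div_one] at h2
  apply h2.congr'
  filter_upwards [hne] with N hN
  rw [euler2G_iter hq0 hq1 z N, mul_div_assoc, div_self hN, mul_one]

lemma euler2_multipliable {q : ℝ} (hq0 : 0 < q) (hq1 : q < 1) (z : ℂ)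
    (hz : ∀ k : ℕ, 1 - (q:ℂ)^k * z ≠ 0) :
    Multipliable (fun k : ℕ => 1 - (q:ℂ)^k * z) := by
  have hqc : ‖(q:ℂ)‖ = q := by rw [Complex.norm_real, Real.norm_eq_abs, abs_of_pos hq0]
  have hlog : Summable (fun k : ℕ => Complex.log (1 - (q:ℂ)^k * z)) := by
    have htend : Tendsto (fun k : ℕ => q ^ k * ‖z‖) atTop (𝓝 0) := by
      simpa using (tendsto_pow_atTop_nhds_zero_of_lt_one hq0.le hq1).mul_const ‖z‖
    obtain ⟨K, hK⟩ := eventually_atTop.mp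
      (htend.eventually_le_const (by norm_num : (0:ℝ) < 1/2))
    rw [← summable_nat_add_iff K]
    apply Summable.of_norm_bounded (g := fun k => (3/2 * (q ^ K * ‖z‖)) * q ^ k)
      (((summable_geometric_of_lt_one hq0.le hq1).mul_left _))
    intro k
    have hnm : ‖-((q:ℂ)^(k+K) * z)‖ = q ^ (k+K) * ‖z‖ := by
      rw [norm_neg, norm_mul, norm_pow, hqc]
    have h2 : ‖-((q:ℂ)^(k+K) * z)‖ ≤ 1/2 := by rw [hnm]; exact hK _ (Nat.le_add_left K k)
    have h3 := Complex.norm_log_one_add_half_le_self h2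
    rw [← sub_eq_add_neg] at h3
    calc ‖Complex.log (1 - (q:ℂ)^(k+K) * z)‖ ≤ 3/2 * ‖-((q:ℂ)^(k+K) * z)‖ := h3
      _ = (3/2 * (q ^ K * ‖z‖)) * q ^ k := by rw [hnm, pow_add]; ring
  have := Complex.multipliable_of_summable_log hlog
  exact this

lemma euler2_hasProd_zero {f : ℕ → ℂ} (k0 : ℕ) (h : f k0 = 0) : HasProd f 0 := by
  have he : (fun s : Finset ℕ => ∏ i ∈ s, f i) =ᶠ[atTop] fun _ => 0 := by
    filter_upwards [eventually_ge_atTop ({k0} : Finset ℕ)] with s hs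
    exact Finset.prod_eq_zero (Finset.singleton_subset_iff.mp hs) h
  exact Tendsto.congr' he.symm tendsto_const_nhds

/-- The second Euler `q`-identity: for `0 < q < 1` and all `z ∈ ℂ`,
`Σ_{n=0}^∞ (−1)ⁿ q^{n(n−1)/2} zⁿ / (q;q)_n = Π_{k=0}^∞ (1 − qᵏ z)`,
where `(q;q)_n = Π_{k=1}^n (1 − qᵏ)`. -/
theorem euler_second_identity (q : ℝ) (hq0 : 0 < q) (hq1 : q < 1) (z : ℂ) :
    ∑' n : ℕ, ((-1 : ℂ) ^ n * (q : ℂ) ^ (n * (n - 1) / 2) * z ^ n /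
        ∏ k ∈ Finset.range n, (1 - (q : ℂ) ^ (k + 1))) =
      ∏' k : ℕ, (1 - (q : ℂ) ^ k * z) := by
  have hL : (∑' n : ℕ, ((-1 : ℂ) ^ n * (q : ℂ) ^ (n * (n - 1) / 2) * z ^ n /
      ∏ k ∈ Finset.range n, (1 - (q : ℂ) ^ (k + 1)))) = euler2G q z := by
    rw [euler2G]
    apply tsum_congr
    intro n
    rw [euler2a]
    ring
  rw [hL]
  by_cases hz : ∀ k : ℕ, 1 - (q:ℂ)^k * z ≠ 0
  · have hm := euler2_multipliable hq0 hq1 z hz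
    have ht := euler2_tendsto_prod hq0 hq1 z
    exact ((hm.hasProd_iff_tendsto_nat.mpr ht).tprod_eq).symm
  · push_neg at hz
    obtain ⟨k0, hk0⟩ := hz
    rw [(euler2_hasProd_zero k0 hk0).tprod_eq]
    rw [euler2G_iter hq0 hq1 z (k0+1),
      Finset.prod_eq_zero (Finset.self_mem_range_succ k0) hk0, zero_mul]
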